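/- arXiv:math-ph/0702100 — 6 statements merged into one kernel-verified Lean document; each statement's English description precedes it below -/
import Mathlib

section
/- Let f : [-π,π] → ℂ be C² with f(-π)=f(π) and f'(-π)=f'(π), and let Lf(θ) = -ε (sin θ · f'(θ))' - f'(θ). Then Re (f', Lf) = -∫_{-π}^{π} (1 + (ε/2) cos θ) |f'(θ)|² dθ. -/
open Real intervalIntegral

/-- For `f : [-π,π] → ℂ` of class `C²` with periodic boundary conditions and
`Lf = -ε (sin θ · f')' - f'`, one has
`Re (f', Lf) = -∫ (1 + (ε/2) cos θ) |f'(θ)|² dθ`. -/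
theorem re_inner_deriv_L (ε : ℝ) (f : ℝ → ℂ)
    (hf : ContDiff ℝ 2 f)
    (hper : f (-π) = f π) (hper' : deriv f (-π) = deriv f π) :
    (∫ θ in (-π)..π, (starRingEnd ℂ) (deriv f θ) *
        (-(ε : ℂ) * deriv (fun t => (Real.sin t : ℂ) * deriv f t) θ - deriv f θ)).re
      = -∫ θ in (-π)..π, (1 + ε / 2 * Real.cos θ) * ‖deriv f θ‖ ^ 2 := by
  set g := deriv f with hgdef
  -- regularity of g
  have hg : ContDiff ℝ 1 g := by
    have hf' : ContDiff ℝ ((1:ℕ)+1) f := by exact_mod_cast hf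
    exact_mod_cast (contDiff_succ_iff_deriv.mp hf').2.2
  have hgc : Continuous g := hg.continuous
  have hg'c : Continuous (deriv g) := hg.continuous_deriv le_rfl
  have hgd : ∀ t, HasDerivAt g (deriv g t) t :=
    fun t => (hg.differentiable one_ne_zero t).hasDerivAt
  -- abbreviations
  set N : ℝ → ℝ := fun θ => ‖g θ‖ ^ 2 with hNdef
  set R : ℝ → ℝ := fun θ => ((starRingEnd ℂ) (g θ) * deriv g θ).re with hRdef
  have hNc : Continuous N := by continuity
  have hRc : Continuous R := by
    apply Complex.continuous_re.comp
    exact (Complex.continuous_conj.comp hgc).mul hg'c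
  -- derivative of sin * g
  have hsg : ∀ θ, deriv (fun t => (Real.sin t : ℂ) * g t) θ
      = (Real.cos θ : ℂ) * g θ + (Real.sin θ : ℂ) * deriv g θ := fun θ =>
    (((Real.hasDerivAt_sin θ).ofReal_comp).mul (hgd θ)).deriv
  -- re of conj z * z
  have hcz : ∀ z : ℂ, ((starRingEnd ℂ) z * z).re = ‖z‖ ^ 2 := by
    intro z
    rw [mul_comm, Complex.mul_conj']
    exact_mod_cast Complex.ofReal_re _
  -- pointwise value of the real part of the integrand
  have hpt : ∀ θ, ((starRingEnd ℂ) (g θ) *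
      (-(ε : ℂ) * deriv (fun t => (Real.sin t : ℂ) * g t) θ - g θ)).re
      = (-ε) * (Real.cos θ * N θ) - ε * (Real.sin θ * R θ) - N θ := by
    intro θ
    rw [hsg θ]
    have expand : (starRingEnd ℂ) (g θ) *
        (-(ε : ℂ) * ((Real.cos θ : ℂ) * g θ + (Real.sin θ : ℂ) * deriv g θ) - g θ)
        = ((-ε * Real.cos θ : ℝ) : ℂ) * ((starRingEnd ℂ) (g θ) * g θ)
          + ((-ε * Real.sin θ : ℝ) : ℂ) * ((starRingEnd ℂ) (g θ) * deriv g θ)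
          - (starRingEnd ℂ) (g θ) * g θ := by push_cast; ring
    rw [expand, Complex.sub_re, Complex.add_re, Complex.re_ofReal_mul,
      Complex.re_ofReal_mul, hcz]
    simp only [hNdef, hRdef]
    ring
  -- derivative of N
  have hN : ∀ θ, HasDerivAt N (2 * R θ) θ := by
    intro θ
    have hcon : HasDerivAt (fun t => (starRingEnd ℂ) (g t))
        ((starRingEnd ℂ) (deriv g θ)) θ := (hgd θ).star
    have hprod : HasDerivAt (fun t => (starRingEnd ℂ) (g t) * g t)
        ((starRingEnd ℂ) (deriv g θ) * g θ + (starRingEnd ℂ) (g θ) * deriv g θ) θ :=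
      hcon.mul (hgd θ)
    have hre := (Complex.reCLM.hasFDerivAt.comp_hasDerivAt θ hprod)
    have heq : (⇑Complex.reCLM ∘ fun t => (starRingEnd ℂ) (g t) * g t) = N := by
      funext t
      simpa [Function.comp] using hcz (g t)
    rw [heq] at hre
    convert hre using 1
    · rfl
    · rfl
    have hswap : ((starRingEnd ℂ) (deriv g θ) * g θ).re
        = ((starRingEnd ℂ) (g θ) * deriv g θ).re := by
      rw [← Complex.conj_re ((starRingEnd ℂ) (deriv g θ) * g θ), map_mul,
        Complex.conj_conj, mul_comm]
    simp only [Complex.reCLM_apply, Complex.add_re, hRdef, hswap]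
    ring
  -- integration by parts : ∫ sin * (2R) = - ∫ cos * N
  have ibp : ∫ θ in (-π)..π, Real.sin θ * (2 * R θ)
      = -∫ θ in (-π)..π, Real.cos θ * N θ := by
    have h := intervalIntegral.integral_mul_deriv_eq_deriv_mul
      (a := -π) (b := π) (u := Real.sin) (u' := Real.cos) (v := N) (v' := fun θ => 2 * R θ)
      (fun x _ => Real.hasDerivAt_sin x) (fun x _ => hN x)
      (Real.continuous_cos.intervalIntegrable _ _)
      ((continuous_const.mul hRc).intervalIntegrable _ _)
    rw [h]
    simp
  have hsinR : ∫ θ in (-π)..π, Real.sin θ * R θ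
      = -(1/2) * ∫ θ in (-π)..π, Real.cos θ * N θ := by
    have : ∫ θ in (-π)..π, Real.sin θ * (2 * R θ)
        = 2 * ∫ θ in (-π)..π, Real.sin θ * R θ := by
      rw [← intervalIntegral.integral_const_mul]
      congr 1; funext θ; ring
    rw [this] at ibp
    linarith
  -- integrability facts
  have IcN : IntervalIntegrable (fun θ => Real.cos θ * N θ) MeasureTheory.volume (-π) π :=
    (Real.continuous_cos.mul hNc).intervalIntegrable _ _
  have IsR : IntervalIntegrable (fun θ => Real.sin θ * R θ) MeasureTheory.volume (-π) π :=
    (Real.continuous_sin.mul hRc).intervalIntegrable _ _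
  have IN : IntervalIntegrable N MeasureTheory.volume (-π) π :=
    hNc.intervalIntegrable _ _
  -- the complex integrand is integrable
  have IF : IntervalIntegrable (fun θ => (starRingEnd ℂ) (g θ) *
      (-(ε : ℂ) * deriv (fun t => (Real.sin t : ℂ) * g t) θ - g θ))
      MeasureTheory.volume (-π) π := by
    apply Continuous.intervalIntegrable
    have hd : Continuous (fun θ => deriv (fun t => (Real.sin t : ℂ) * g t) θ) := by
      have : (fun θ => deriv (fun t => (Real.sin t : ℂ) * g t) θ)
          = fun θ => (Real.cos θ : ℂ) * g θ + (Real.sin θ : ℂ) * deriv g θ := by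
        funext θ; exact hsg θ
      rw [this]
      exact ((Complex.continuous_ofReal.comp Real.continuous_cos).mul hgc).add
        ((Complex.continuous_ofReal.comp Real.continuous_sin).mul hg'c)
    exact (Complex.continuous_conj.comp hgc).mul ((continuous_const.mul hd).sub hgc)
  -- move Re inside
  rw [← Complex.reCLM_apply, ← Complex.reCLM.intervalIntegral_comp_comm IF]
  have : ∫ θ in (-π)..π, Complex.reCLM ((starRingEnd ℂ) (g θ) *
      (-(ε : ℂ) * deriv (fun t => (Real.sin t : ℂ) * g t) θ - g θ))
      = ∫ θ in (-π)..π, ((-ε) * (Real.cos θ * N θ) - ε * (Real.sin θ * R θ) - N θ) := by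
    apply intervalIntegral.integral_congr
    intro θ _
    simpa using hpt θ
  rw [this]
  have hsplit : ∫ θ in (-π)..π, ((-ε) * (Real.cos θ * N θ) - ε * (Real.sin θ * R θ) - N θ)
      = (-ε) * (∫ θ in (-π)..π, Real.cos θ * N θ)
        - ε * (∫ θ in (-π)..π, Real.sin θ * R θ)
        - ∫ θ in (-π)..π, N θ := by
    rw [intervalIntegral.integral_sub ((IcN.const_mul _).sub (IsR.const_mul _)) IN,
      intervalIntegral.integral_sub (IcN.const_mul _) (IsR.const_mul _),
      intervalIntegral.integral_const_mul, intervalIntegral.integral_const_mul]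
  rw [hsplit, hsinR]
  have hrhs : ∫ θ in (-π)..π, (1 + ε / 2 * Real.cos θ) * N θ
      = (∫ θ in (-π)..π, N θ) + (ε/2) * ∫ θ in (-π)..π, Real.cos θ * N θ := by
    rw [← intervalIntegral.integral_const_mul, ← intervalIntegral.integral_add IN
      ((IcN.const_mul _))]
    congr 1; funext θ; ring
  rw [hrhs]
  ring
end

section
/- Let |ε| < 2 and let f : [-π,π] → ℂ be C² with periodic boundary conditions f(-π)=f(π), f'(-π)=f'(π). Then for Lf = -ε(sin θ f')' - f' and any real λ₀, one has ‖(L - λ₀)f‖_{L²} ≥ (1 - |ε|/2) ‖f'‖_{L²}. -/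
open Real intervalIntegral

/-- For `|ε| < 2`, `f : [-π,π] → ℂ` of class `C²` with periodic boundary
conditions, `Lf = -ε(sin θ f')' - f'`, and any real `λ₀`:
`‖(L - λ₀)f‖_{L²} ≥ (1 - |ε|/2) ‖f'‖_{L²}`. -/
theorem resolvent_lower_bound (ε : ℝ) (hε : |ε| < 2) (f : ℝ → ℂ)
    (hf : ContDiff ℝ 2 f)
    (hper : f (-π) = f π) (hper' : deriv f (-π) = deriv f π) (lam₀ : ℝ) :
    Real.sqrt (∫ θ in (-π)..π,
        ‖(-(ε : ℂ) * deriv (fun t => (Real.sin t : ℂ) * deriv f t) θ - deriv f θ)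
          - (lam₀ : ℂ) * f θ‖ ^ 2)
      ≥ (1 - |ε| / 2) * Real.sqrt (∫ θ in (-π)..π, ‖deriv f θ‖ ^ 2) := by
  have hπ : (0:ℝ) < π := Real.pi_pos
  have hab : (-π : ℝ) ≤ π := by linarith
  set D : ℝ → ℂ := deriv f with hDdef
  set g : ℝ → ℂ := fun t => (Real.sin t : ℂ) * D t with hgdef
  set F : ℝ → ℂ := fun θ => (-(ε : ℂ) * deriv g θ - D θ) - (lam₀ : ℂ) * f θ with hFdef
  show Real.sqrt (∫ θ in (-π)..π, ‖F θ‖ ^ 2)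
      ≥ (1 - |ε| / 2) * Real.sqrt (∫ θ in (-π)..π, ‖D θ‖ ^ 2)
  -- smoothness facts
  have hf2 : ContDiff ℝ ((1:WithTop ℕ∞) + 1) f := by
    rwa [(by norm_num : (2 : WithTop ℕ∞) = 1 + 1)] at hf
  have hfd : Differentiable ℝ f := (contDiff_succ_iff_deriv.mp hf2).1
  have hD1 : ContDiff ℝ 1 D := (contDiff_succ_iff_deriv.mp hf2).2.2
  have hDd : Differentiable ℝ D := hD1.differentiable one_ne_zero
  have hDc : Continuous D := hD1.continuous
  have hD'c : Continuous (deriv D) := (contDiff_one_iff_deriv.mp hD1).2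
  have hsinc : Continuous (fun t : ℝ => (Real.sin t : ℂ)) :=
    Complex.continuous_ofReal.comp Real.continuous_sin
  have hg1 : ContDiff ℝ 1 g := by
    exact ((Complex.ofRealCLM.contDiff.comp Real.contDiff_sin).of_le le_top).mul hD1
  have hgc : Continuous g := hg1.continuous
  have hg'c : Continuous (deriv g) := (contDiff_one_iff_deriv.mp hg1).2
  have hfc : Continuous f := hf.continuous
  have hFc : Continuous F := by
    exact ((continuous_const.mul hg'c).sub hDc).sub (continuous_const.mul hfc)
  have hcDc : Continuous (fun t => star (D t)) := continuous_star.comp hDc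
  have hcD'c : Continuous (fun t => star (deriv D t)) := continuous_star.comp hD'c
  have hcfc : Continuous (fun t => star (f t)) := continuous_star.comp hfc
  -- HasDerivAt facts
  have hDat : ∀ x : ℝ, HasDerivAt f (D x) x := fun x => (hfd x).hasDerivAt
  have hD'at : ∀ x : ℝ, HasDerivAt D (deriv D x) x := fun x => (hDd x).hasDerivAt
  have hgat : ∀ x : ℝ, HasDerivAt g ((Real.cos x : ℂ) * D x + (Real.sin x : ℂ) * deriv D x) x :=
    fun x => ((Real.hasDerivAt_sin x).ofReal_comp).mul (hD'at x)
  have hderivg : ∀ x : ℝ, deriv g x = (Real.cos x : ℂ) * D x + (Real.sin x : ℂ) * deriv D x :=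
    fun x => (hgat x).deriv
  -- Step A : ∫ (D conj f + f conj D) = 0
  have stepA : (∫ θ in (-π)..π,
      (D θ * star (f θ) + f θ * star (D θ))) = 0 := by
    rw [integral_deriv_mul_eq_sub (u := f) (v := fun t => star (f t))
      (fun x _ => hDat x) (fun x _ => (hDat x).star)
      (hDc.intervalIntegrable _ _) (hcDc.intervalIntegrable _ _)]
    rw [hper, sub_self]
  -- Step B : integration by parts  ∫ (deriv g * conj D + g * conj D') = 0
  have stepB : (∫ θ in (-π)..π,
      (deriv g θ * star (D θ) + g θ * star (deriv D θ))) = 0 := by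
    rw [integral_deriv_mul_eq_sub (u := g) (v := fun t => star (D t))
      (fun x _ => (hgat x).congr_deriv (hderivg x).symm)
      (fun x _ => (hD'at x).star)
      (hg'c.intervalIntegrable _ _) (hcD'c.intervalIntegrable _ _)]
    simp [hgdef, Real.sin_pi]
  have stepC : (∫ θ in (-π)..π,
      (((Real.cos θ : ℂ) * D θ + (Real.sin θ : ℂ) * deriv D θ) * star (D θ)
        + g θ * star (deriv D θ))) = 0 := by
    have := stepB
    simp_rw [hderivg] at this
    exact this
  -- re of interval integral
  have reint : ∀ h : ℝ → ℂ, Continuous h →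
      (∫ θ in (-π)..π, h θ).re = ∫ θ in (-π)..π, (h θ).re := by
    intro h hh
    have := Complex.reCLM.intervalIntegral_comp_comm
      (μ := MeasureTheory.volume) (hh.intervalIntegrable (-π) π)
    simpa using this.symm
  -- real quantities
  set A : ℝ := ∫ θ in (-π)..π, ‖F θ‖ ^ 2 with hA
  set C : ℝ := ∫ θ in (-π)..π, ‖D θ‖ ^ 2 with hC
  set K : ℝ := ∫ θ in (-π)..π, Real.cos θ * ‖D θ‖ ^ 2 with hK
  set S : ℝ := ∫ θ in (-π)..π, Real.sin θ * (D θ * star (deriv D θ)).re with hS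
  have hCnn : 0 ≤ C := integral_nonneg hab (fun θ _ => by positivity)
  -- pointwise helpers
  have hrmul : ∀ (r : ℝ) (z : ℂ), ((r : ℂ) * z).re = r * z.re := by
    intro r z; simp [Complex.mul_re]
  have hznorm : ∀ z : ℂ, (z * star z).re = ‖z‖ ^ 2 := by
    intro z
    rw [Complex.star_def, Complex.mul_conj]
    rw [Complex.ofReal_re, Complex.normSq_eq_norm_sq]
  -- split stepC into pieces, take real parts
  have intDD' : IntervalIntegrable (fun θ => g θ * star (deriv D θ)) MeasureTheory.volume (-π) π :=
    (hgc.mul hcD'c).intervalIntegrable _ _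
  have intJ1 : IntervalIntegrable (fun θ => (Real.cos θ : ℂ) * D θ * star (D θ))
      MeasureTheory.volume (-π) π :=
    (((Complex.continuous_ofReal.comp Real.continuous_cos).mul hDc).mul hcDc).intervalIntegrable _ _
  have intJ2 : IntervalIntegrable (fun θ => (Real.sin θ : ℂ) * deriv D θ * star (D θ))
      MeasureTheory.volume (-π) π :=
    ((hsinc.mul hD'c).mul hcDc).intervalIntegrable _ _
  have intI1 : IntervalIntegrable (fun θ => deriv g θ * star (D θ)) MeasureTheory.volume (-π) π :=
    (hg'c.mul hcDc).intervalIntegrable _ _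
  -- I2.re = S
  have hI2re : (∫ θ in (-π)..π, g θ * star (deriv D θ)).re = S := by
    rw [reint (fun θ => g θ * star (deriv D θ)) (hgc.mul hcD'c), hS]
    congr 1; funext θ
    show ((Real.sin θ : ℂ) * D θ * star (deriv D θ)).re = _
    rw [mul_assoc, hrmul]
  -- J1.re = K
  have hJ1re : (∫ θ in (-π)..π, (Real.cos θ : ℂ) * D θ * star (D θ)).re = K := by
    rw [reint (fun θ => (Real.cos θ : ℂ) * D θ * star (D θ)) (((Complex.continuous_ofReal.comp Real.continuous_cos).mul hDc).mul hcDc), hK]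
    congr 1; funext θ
    rw [mul_assoc, hrmul, hznorm]
  -- J2.re = S
  have hJ2re : (∫ θ in (-π)..π, (Real.sin θ : ℂ) * deriv D θ * star (D θ)).re = S := by
    rw [reint (fun θ => (Real.sin θ : ℂ) * deriv D θ * star (D θ)) ((hsinc.mul hD'c).mul hcDc), hS]
    congr 1; funext θ
    rw [mul_assoc, hrmul]
    congr 1
    have : (deriv D θ * star (D θ)).re = (star (deriv D θ * star (D θ))).re := by
      simp [Complex.star_def]
    rw [this, star_mul, star_star]
  -- from stepC : K + 2S = 0
  have hKS : K + 2 * S = 0 := by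
    have hsplit : (∫ θ in (-π)..π, (Real.cos θ : ℂ) * D θ * star (D θ))
        + (∫ θ in (-π)..π, (Real.sin θ : ℂ) * deriv D θ * star (D θ))
        + (∫ θ in (-π)..π, g θ * star (deriv D θ)) = 0 := by
      rw [← integral_add intJ1 intJ2, ← integral_add (intJ1.add intJ2) intDD']
      rw [← stepC]
      congr 1; funext θ; ring
    have := congrArg Complex.re hsplit
    simp only [Complex.add_re, Complex.zero_re, hJ1re, hJ2re, hI2re] at this
    linarith
  -- I1.re = K / 2
  have hI1re : (∫ θ in (-π)..π, deriv g θ * star (D θ)).re = K / 2 := by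
    have hsplit : (∫ θ in (-π)..π, deriv g θ * star (D θ))
        + (∫ θ in (-π)..π, g θ * star (deriv D θ)) = 0 := by
      rw [← integral_add intI1 intDD']; exact stepB
    have := congrArg Complex.re hsplit
    simp only [Complex.add_re, Complex.zero_re, hI2re] at this
    linarith
  -- λ₀ term : ∫ (f * star D).re = 0
  have hT : (∫ θ in (-π)..π, (f θ * star (D θ)).re) = 0 := by
    have h1 : (∫ θ in (-π)..π, D θ * star (f θ))
        + (∫ θ in (-π)..π, f θ * star (D θ)) = 0 := by
      rw [← integral_add (f := fun θ => D θ * star (f θ)) (g := fun θ => f θ * star (D θ)) ((hDc.mul hcfc).intervalIntegrable _ _)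
        ((hfc.mul hcDc).intervalIntegrable _ _)]
      exact stepA
    have := congrArg Complex.re h1
    rw [Complex.add_re, reint (fun θ => D θ * star (f θ)) (hDc.mul hcfc),
      reint (fun θ => f θ * star (D θ)) (hfc.mul hcDc), Complex.zero_re] at this
    have heq : (∫ θ in (-π)..π, (D θ * star (f θ)).re)
        = ∫ θ in (-π)..π, (f θ * star (D θ)).re := by
      congr 1; funext θ
      have : (D θ * star (f θ)).re = (star (D θ * star (f θ))).re := by
        simp [Complex.star_def]
      rw [this, star_mul, star_star]
    rw [heq] at this
    linarith
  -- compute B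
  set B : ℝ := ∫ θ in (-π)..π, (F θ * star (D θ)).re with hB
  have hXc : Continuous fun θ => (deriv g θ * star (D θ)).re :=
    Complex.continuous_re.comp (hg'c.mul hcDc)
  have hYc : Continuous fun θ => (D θ * star (D θ)).re :=
    Complex.continuous_re.comp (hDc.mul hcDc)
  have hZc : Continuous fun θ => (f θ * star (D θ)).re :=
    Complex.continuous_re.comp (hfc.mul hcDc)
  have hBval : B = -ε * (K / 2) - C := by
    have hpt : ∀ θ, (F θ * star (D θ)).re
        = -(ε * (deriv g θ * star (D θ)).re) - (D θ * star (D θ)).re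
          - lam₀ * (f θ * star (D θ)).re := by
      intro θ
      have hmul : F θ * star (D θ) = -((ε : ℂ) * (deriv g θ * star (D θ)))
          - D θ * star (D θ) - (lam₀ : ℂ) * (f θ * star (D θ)) := by
        rw [hFdef]; ring
      rw [hmul]
      simp only [Complex.sub_re, Complex.neg_re, hrmul]
    rw [hB]
    simp_rw [hpt]
    rw [integral_sub (f := fun θ => -(ε * (deriv g θ * star (D θ)).re) - (D θ * star (D θ)).re) (g := fun θ => lam₀ * (f θ * star (D θ)).re) (((continuous_const.mul hXc).neg.sub hYc).intervalIntegrable _ _)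
        ((continuous_const.mul hZc).intervalIntegrable _ _),
      integral_sub (f := fun θ => -(ε * (deriv g θ * star (D θ)).re)) (g := fun θ => (D θ * star (D θ)).re) ((continuous_const.mul hXc).neg.intervalIntegrable _ _)
        (hYc.intervalIntegrable _ _),
      integral_neg, integral_const_mul, integral_const_mul]
    have e1 : (∫ θ in (-π)..π, (deriv g θ * star (D θ)).re) = K / 2 := by
      rw [← reint (fun θ => deriv g θ * star (D θ)) (hg'c.mul hcDc)]; exact hI1re
    have e2 : (∫ θ in (-π)..π, (D θ * star (D θ)).re) = C := by
      rw [hC]; congr 1; funext θ; exact hznorm (D θ)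
    rw [e1, e2, hT]
    ring
  -- |K| ≤ C
  have hKleC : |K| ≤ C := by
    have h1 : |K| ≤ ∫ θ in (-π)..π, |Real.cos θ * ‖D θ‖ ^ 2| := by
      rw [hK]; exact intervalIntegral.abs_integral_le_integral_abs hab
    have h2 : (∫ θ in (-π)..π, |Real.cos θ * ‖D θ‖ ^ 2|) ≤ C := by
      rw [hC]
      apply integral_mono_on hab
        (((Real.continuous_cos.mul ((hDc.norm).pow 2)).abs).intervalIntegrable _ _)
        (((hDc.norm).pow 2).intervalIntegrable _ _)
      intro x _
      show |Real.cos x * ‖D x‖ ^ 2| ≤ ‖D x‖ ^ 2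
      rw [abs_mul, abs_of_nonneg (by positivity : (0:ℝ) ≤ ‖D x‖ ^ 2)]
      nlinarith [Real.abs_cos_le_one x, sq_nonneg ‖D x‖, abs_nonneg (Real.cos x)]
    linarith
  -- quadratic expansion : ∀ s, 0 ≤ A + 2sB + s²C
  have hnormexp : ∀ (x y : ℂ) (s : ℝ),
      ‖x + (s : ℂ) * y‖ ^ 2 = ‖x‖ ^ 2 + 2 * s * (x * star y).re + s ^ 2 * ‖y‖ ^ 2 := by
    intro x y s
    simp only [Complex.star_def, Complex.sq_norm, Complex.normSq_apply,
      Complex.add_re, Complex.add_im, Complex.mul_re, Complex.mul_im, Complex.conj_re,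
      Complex.conj_im, Complex.ofReal_re, Complex.ofReal_im]
    ring
  have hZc' : Continuous fun θ => (F θ * star (D θ)).re :=
    Complex.continuous_re.comp (hFc.mul hcDc)
  have quad : ∀ s : ℝ, 0 ≤ A + 2 * s * B + s ^ 2 * C := by
    intro s
    have h0 : 0 ≤ ∫ θ in (-π)..π, ‖F θ + (s : ℂ) * D θ‖ ^ 2 :=
      integral_nonneg hab (fun θ _ => by positivity)
    have heq : (∫ θ in (-π)..π, ‖F θ + (s : ℂ) * D θ‖ ^ 2) = A + 2 * s * B + s ^ 2 * C := by
      have hfun : (fun θ => ‖F θ + (s : ℂ) * D θ‖ ^ 2)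
          = fun θ => ‖F θ‖ ^ 2 + (2 * s * (F θ * star (D θ)).re + s ^ 2 * ‖D θ‖ ^ 2) :=
        funext fun θ => by rw [hnormexp]; ring
      rw [hfun, integral_add (f := fun θ => ‖F θ‖ ^ 2) (g := fun θ => 2 * s * (F θ * star (D θ)).re + s ^ 2 * ‖D θ‖ ^ 2) ((hFc.norm.pow 2).intervalIntegrable _ _)
          (((continuous_const.mul hZc').add
            (continuous_const.mul ((hDc.norm).pow 2))).intervalIntegrable _ _),
        integral_add (f := fun θ => 2 * s * (F θ * star (D θ)).re) (g := fun θ => s ^ 2 * ‖D θ‖ ^ 2) ((continuous_const.mul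
            hZc').intervalIntegrable _ _)
          ((continuous_const.mul ((hDc.norm).pow 2)).intervalIntegrable _ _),
        integral_const_mul, integral_const_mul, hA, hB, hC]
      ring
    rw [heq] at h0
    exact h0
  have hc : 0 < 1 - |ε| / 2 := by linarith
  have hcC : (1 - |ε| / 2) * C ≤ -B := by
    have habs : -(|ε| * C) ≤ ε * K := by
      have h1 : |ε * K| ≤ |ε| * C := by
        rw [abs_mul]
        exact mul_le_mul_of_nonneg_left hKleC (abs_nonneg ε)
      nlinarith [neg_abs_le (ε * K)]
    rw [hBval]
    nlinarith
  have hAC : (1 - |ε| / 2) ^ 2 * C ≤ A := by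
    have hq := quad (1 - |ε| / 2)
    nlinarith [mul_le_mul_of_nonneg_left hcC (by positivity : (0:ℝ) ≤ 2 * (1 - |ε| / 2))]
  have hfin := Real.sqrt_le_sqrt hAC
  rw [Real.sqrt_mul (sq_nonneg _), Real.sqrt_sq hc.le] at hfin
  exact hfin
end

section
/- Suppose f : [-π,π] → ℂ is C² with periodic boundary conditions f(-π)=f(π), f'(-π)=f'(π), f is not identically zero, and f satisfies -ε(sin θ f')' - f' = λ f for some λ ∈ ℂ and ε ∈ ℝ. Then Re λ · ∫|f|² = ε ∫_{-π}^{π} sin θ |f'(θ)|² dθ and i Im λ · ∫|f|² = -∫_{-π}^{π} conj(f) f' dθ. -/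
open Real intervalIntegral

lemma eigen_aux_integral_conj (a b : ℝ) (g : ℝ → ℂ) :
    ∫ x in a..b, (starRingEnd ℂ) (g x) = (starRingEnd ℂ) (∫ x in a..b, g x) := by
  simp only [intervalIntegral, ← integral_conj, map_sub]

/-- For a `C²` periodic eigenfunction `f` of `Lf = -ε(sin θ f')' - f' = λ f`:
`Re λ · ∫|f|² = ε ∫ sin θ |f'|²` and `i Im λ · ∫|f|² = -∫ conj(f) f'`. -/
theorem eigenvalue_re_im_formulas (ε : ℝ) (lam : ℂ) (f : ℝ → ℂ)
    (hf : ContDiff ℝ 2 f)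
    (hper : f (-π) = f π) (hper' : deriv f (-π) = deriv f π)
    (hnz : ∃ θ ∈ Set.Icc (-π) π, f θ ≠ 0)
    (heig : ∀ θ ∈ Set.Icc (-π) π,
      -(ε : ℂ) * deriv (fun t => (Real.sin t : ℂ) * deriv f t) θ - deriv f θ
        = lam * f θ) :
    lam.re * (∫ θ in (-π)..π, ‖f θ‖ ^ 2)
        = ε * ∫ θ in (-π)..π, Real.sin θ * ‖deriv f θ‖ ^ 2
    ∧ Complex.I * (lam.im : ℂ) * ((∫ θ in (-π)..π, ‖f θ‖ ^ 2 : ℝ) : ℂ)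
        = -∫ θ in (-π)..π, (starRingEnd ℂ) (f θ) * deriv f θ := by
  have hpi : (-π : ℝ) ≤ π := by linarith [Real.pi_pos]
  -- basic smoothness facts
  have h2 : (2 : WithTop ℕ∞) = 1 + 1 := by norm_num
  rw [h2, contDiff_succ_iff_deriv] at hf
  obtain ⟨hfd, -, hg1⟩ := hf
  set g : ℝ → ℂ := deriv f with hg_def
  have hfc : Continuous f := hfd.continuous
  have hgc : Continuous g := hg1.continuous
  set v : ℝ → ℂ := fun t => (Real.sin t : ℂ) * g t with hv_def
  have hsin : ContDiff ℝ 1 (fun t : ℝ => (Real.sin t : ℂ)) :=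
    Complex.ofRealCLM.contDiff.comp Real.contDiff_sin
  have hv1 : ContDiff ℝ 1 v := hsin.mul hg1
  have hvd : Differentiable ℝ v := hv1.differentiable one_ne_zero
  have hvc' : Continuous (deriv v) := (contDiff_one_iff_deriv.mp hv1).2
  -- derivative of conj ∘ f
  have hu : ∀ x : ℝ, HasDerivAt (fun t => (starRingEnd ℂ) (f t)) ((starRingEnd ℂ) (g x)) x := by
    intro x
    exact (hfd x).hasDerivAt.star
  -- integrability facts
  have hint1 : IntervalIntegrable (fun x => (starRingEnd ℂ) (g x)) MeasureTheory.volume (-π) π :=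
    ((Complex.continuous_conj.comp hgc)).intervalIntegrable _ _
  have hint2 : IntervalIntegrable (deriv v) MeasureTheory.volume (-π) π :=
    hvc'.intervalIntegrable _ _
  -- integration by parts : ∫ conj f * v' = conj f v |_{-π}^{π} - ∫ conj g * v
  have hparts : ∫ x in (-π)..π, (starRingEnd ℂ) (f x) * deriv v x
      = (starRingEnd ℂ) (f π) * v π - (starRingEnd ℂ) (f (-π)) * v (-π)
        - ∫ x in (-π)..π, (starRingEnd ℂ) (g x) * v x :=
    integral_mul_deriv_eq_deriv_mul (fun x _ => hu x)
      (fun x _ => (hvd x).hasDerivAt) hint1 hint2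
  have hvz : v π = 0 ∧ v (-π) = 0 := by
    constructor
    · show (Real.sin π : ℂ) * g π = 0
      rw [Real.sin_pi]; norm_num
    · show (Real.sin (-π) : ℂ) * g (-π) = 0
      rw [Real.sin_neg, Real.sin_pi]; norm_num
  -- ∫ conj g * v = ∫ (sin θ * ‖g θ‖²  : ℂ)
  have hSval : ∫ x in (-π)..π, (starRingEnd ℂ) (g x) * v x
      = ((∫ θ in (-π)..π, Real.sin θ * ‖g θ‖ ^ 2 : ℝ) : ℂ) := by
    rw [← intervalIntegral.integral_ofReal]
    apply intervalIntegral.integral_congr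
    intro x _
    simp only [hv_def]
    rw [show (starRingEnd ℂ) (g x) * ((Real.sin x : ℂ) * g x)
        = (Real.sin x : ℂ) * ((starRingEnd ℂ) (g x) * g x) by ring]
    rw [Complex.conj_mul']
    push_cast
    ring
  set A : ℝ := ∫ θ in (-π)..π, ‖f θ‖ ^ 2 with hA_def
  set S : ℝ := ∫ θ in (-π)..π, Real.sin θ * ‖g θ‖ ^ 2 with hS_def
  set B : ℂ := ∫ θ in (-π)..π, (starRingEnd ℂ) (f θ) * g θ with hB_def
  -- main identity : lam * A = ε * S - B
  have key : lam * (A : ℂ) = (ε : ℂ) * (S : ℂ) - B := by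
    have hAc : ((A : ℝ) : ℂ) = ∫ θ in (-π)..π, (starRingEnd ℂ) (f θ) * f θ := by
      rw [hA_def, ← intervalIntegral.integral_ofReal]
      apply intervalIntegral.integral_congr
      intro x _
      show ((‖f x‖ ^ 2 : ℝ) : ℂ) = (starRingEnd ℂ) (f x) * f x
      rw [Complex.conj_mul']
      push_cast
      ring
    have hlhs : lam * (A : ℂ) = ∫ θ in (-π)..π, (starRingEnd ℂ) (f θ) * (lam * f θ) := by
      rw [hAc, ← intervalIntegral.integral_const_mul]
      apply intervalIntegral.integral_congr
      intro x _; ring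
    rw [hlhs]
    have hcongr : ∫ θ in (-π)..π, (starRingEnd ℂ) (f θ) * (lam * f θ)
        = ∫ θ in (-π)..π, (starRingEnd ℂ) (f θ)
            * (-(ε : ℂ) * deriv v θ - g θ) := by
      apply intervalIntegral.integral_congr
      intro x hx
      rw [Set.uIcc_of_le hpi] at hx
      show (starRingEnd ℂ) (f x) * (lam * f x)
          = (starRingEnd ℂ) (f x) * (-(ε : ℂ) * deriv v x - g x)
      rw [← heig x hx]
    rw [hcongr]
    have hsplit : ∀ x : ℝ, (starRingEnd ℂ) (f x) * (-(ε : ℂ) * deriv v x - g x)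
        = -(ε : ℂ) * ((starRingEnd ℂ) (f x) * deriv v x)
          - (starRingEnd ℂ) (f x) * g x := by intro x; ring
    simp only [hsplit]
    rw [intervalIntegral.integral_sub, intervalIntegral.integral_const_mul, hparts,
      hvz.1, hvz.2, hSval]
    · rw [← hB_def]; ring
    · exact (continuous_const.mul ((Complex.continuous_conj.comp hfc).mul
        hvc')).intervalIntegrable _ _
    · exact ((Complex.continuous_conj.comp hfc).mul hgc).intervalIntegrable _ _
  -- B is purely imaginary
  have hBre : B.re = 0 := by
    have hconjB : (starRingEnd ℂ) B = ∫ θ in (-π)..π, f θ * (starRingEnd ℂ) (g θ) := by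
      rw [hB_def, ← eigen_aux_integral_conj]
      apply intervalIntegral.integral_congr
      intro x _
      simp [mul_comm]
    have hc1 : Continuous fun x => (starRingEnd ℂ) (f x) * g x :=
      (Complex.continuous_conj.comp hfc).mul hgc
    have hc2 : Continuous fun x => f x * (starRingEnd ℂ) (g x) :=
      hfc.mul (Complex.continuous_conj.comp hgc)
    have hsum : B + (starRingEnd ℂ) B = 0 := by
      rw [hconjB, hB_def, ← intervalIntegral.integral_add
        (hc1.intervalIntegrable _ _) (hc2.intervalIntegrable _ _)]
      have := intervalIntegral.integral_eq_sub_of_hasDerivAt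
        (f := fun x => (starRingEnd ℂ) (f x) * f x)
        (f' := fun x => (starRingEnd ℂ) (f x) * g x + f x * (starRingEnd ℂ) (g x))
        (a := -π) (b := π)
        (fun x _ => by
          have : HasDerivAt (fun t => (starRingEnd ℂ) (f t) * f t)
              ((starRingEnd ℂ) (g x) * f x + (starRingEnd ℂ) (f x) * g x) x :=
            (hu x).fun_mul (hfd x).hasDerivAt
          exact this.congr_deriv (by ring))
        ((hc1.add hc2).intervalIntegrable _ _)
      rw [this]
      show (starRingEnd ℂ) (f π) * f π - (starRingEnd ℂ) (f (-π)) * f (-π) = 0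
      rw [hper]
      ring
    have := congrArg Complex.re hsum
    simp [Complex.add_re, Complex.conj_re] at this
    linarith
  -- take real parts of key
  have hre : lam.re * A = ε * S := by
    have := congrArg Complex.re key
    simpa [Complex.mul_re, Complex.sub_re, hBre] using this
  refine ⟨hre, ?_⟩
  have hkey_im := congrArg Complex.im key
  simp [Complex.mul_im, Complex.sub_im] at hkey_im
  refine Complex.ext ?_ ?_
  · simp [Complex.mul_re, Complex.mul_im, hBre, ← hB_def]
  · simpa [Complex.mul_im, Complex.mul_re, ← hB_def] using hkey_im
end

section
/- Suppose |ε| < 2 and f : [-π,π] → ℂ is C², periodic (f and f' agree at ±π), satisfies -ε(sin θ f')' - f' = λ f, and f is not constant. Then Im λ ≠ 0. -/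
open Real intervalIntegral

lemma hasDerivAt_normSq' {u : ℝ → ℂ} {u' : ℂ} {θ : ℝ} (hu : HasDerivAt u u' θ) :
    HasDerivAt (fun t => Complex.normSq (u t))
      (2 * ((starRingEnd ℂ) (u θ) * u').re) θ := by
  have h1 : HasDerivAt (fun t => u t * (starRingEnd ℂ) (u t))
      (u' * (starRingEnd ℂ) (u θ) + u θ * (starRingEnd ℂ) u') θ := hu.mul hu.star
  have h2 := Complex.reCLM.hasFDerivAt.comp_hasDerivAt θ h1
  have heq : (fun t => Complex.normSq (u t))
      = fun t => Complex.reCLM (u t * (starRingEnd ℂ) (u t)) := by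
    funext t; simp [Complex.mul_conj]
  rw [heq]
  convert h2 using 1
  · rfl
  · rfl
  · rfl
  simp only [Complex.reCLM_apply, Complex.add_re, Complex.mul_re, Complex.conj_re,
    Complex.conj_im]
  ring

/-- For `|ε| < 2` and a non-constant `C²` periodic eigenfunction `f` of
`-ε(sin θ f')' - f' = λ f`, the eigenvalue satisfies `Im λ ≠ 0`. -/
theorem eigenvalue_im_ne_zero (ε : ℝ) (hε : |ε| < 2) (lam : ℂ) (f : ℝ → ℂ)
    (hf : ContDiff ℝ 2 f)
    (hper : f (-π) = f π) (hper' : deriv f (-π) = deriv f π)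
    (heig : ∀ θ ∈ Set.Icc (-π) π,
      -(ε : ℂ) * deriv (fun t => (Real.sin t : ℂ) * deriv f t) θ - deriv f θ
        = lam * f θ)
    (hnc : ¬∃ c : ℂ, ∀ θ ∈ Set.Icc (-π) π, f θ = c) :
    lam.im ≠ 0 := by
  intro him
  have hπ : (0:ℝ) < π := Real.pi_pos
  have hle : (-π) ≤ π := by linarith
  have hfd : Differentiable ℝ f := hf.differentiable two_ne_zero
  have hg1 : ContDiff ℝ 1 (deriv f) :=
    (contDiff_succ_iff_deriv.mp (by exact_mod_cast hf : ContDiff ℝ ((1:ℕ)+1) f)).2.2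
  have hgd : Differentiable ℝ (deriv f) := hg1.differentiable one_ne_zero
  have hgc : Continuous (deriv f) := hgd.continuous
  set g := deriv f with hgdef
  set B : ℝ → ℝ := fun θ => Complex.normSq (g θ) with hBdef
  set A : ℝ → ℝ := fun θ => Complex.normSq (f θ) with hAdef
  set Φ : ℝ → ℝ := fun θ => lam.re / 2 * A θ + ε / 2 * (Real.sin θ * B θ) with hΦdef
  set W : ℝ → ℝ := fun θ => 1 + ε / 2 * Real.cos θ with hWdef
  have hWpos : ∀ θ, 0 < W θ := by
    intro θ
    have h2 : |ε / 2 * Real.cos θ| ≤ |ε| / 2 := by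
      rw [abs_mul, abs_div]
      calc |ε| / |(2:ℝ)| * |Real.cos θ| ≤ |ε| / |(2:ℝ)| * 1 := by
            exact mul_le_mul_of_nonneg_left (Real.abs_cos_le_one θ) (by positivity)
        _ = |ε| / 2 := by norm_num
    have := neg_abs_le (ε / 2 * Real.cos θ)
    simp only [hWdef]
    linarith
  -- derivative of Φ on the interval
  have hΦderiv : ∀ θ ∈ Set.uIcc (-π) π, HasDerivAt Φ (-(W θ * B θ)) θ := by
    intro θ hθ
    rw [Set.uIcc_of_le hle] at hθ
    have hfθ : HasDerivAt f (g θ) θ := (hfd θ).hasDerivAt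
    have hgθ : HasDerivAt g (deriv g θ) θ := (hgd θ).hasDerivAt
    have hA' : HasDerivAt A (2 * ((starRingEnd ℂ) (f θ) * g θ).re) θ := hasDerivAt_normSq' hfθ
    have hB' : HasDerivAt B (2 * ((starRingEnd ℂ) (g θ) * deriv g θ).re) θ :=
      hasDerivAt_normSq' hgθ
    have hsin : HasDerivAt Real.sin (Real.cos θ) θ := Real.hasDerivAt_sin θ
    have hΦ' : HasDerivAt Φ (lam.re / 2 * (2 * ((starRingEnd ℂ) (f θ) * g θ).re)
        + ε / 2 * (Real.cos θ * B θ
          + Real.sin θ * (2 * ((starRingEnd ℂ) (g θ) * deriv g θ).re))) θ :=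
      (hA'.const_mul (lam.re / 2)).add ((hsin.mul hB').const_mul (ε / 2))
    convert hΦ' using 1
    have hs : HasDerivAt (fun t : ℝ => (Real.sin t : ℂ)) (Complex.ofRealCLM (Real.cos θ)) θ :=
      Complex.ofRealCLM.hasFDerivAt.comp_hasDerivAt θ hsin
    have hD : deriv (fun t => (Real.sin t : ℂ) * g t) θ
        = (Real.cos θ : ℂ) * g θ + (Real.sin θ : ℂ) * deriv g θ := by
      have hm : HasDerivAt (fun t => (Real.sin t : ℂ) * g t) _ θ := hs.mul hgθ
      have := hm.deriv
      rw [this]; simp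
    have E := heig θ hθ
    rw [hD] at E
    have e1 := congrArg Complex.re E
    have e2 := congrArg Complex.im E
    simp only [Complex.add_re, Complex.add_im, Complex.mul_re, Complex.mul_im, Complex.sub_re,
      Complex.sub_im, Complex.neg_re, Complex.neg_im, Complex.ofReal_re, Complex.ofReal_im,
      him] at e1 e2
    simp only [hWdef, hBdef, Complex.normSq_apply, Complex.mul_re, Complex.conj_re,
      Complex.conj_im]
    linear_combination (g θ).re * e1 + (g θ).im * e2
  have hBc : Continuous B := Complex.continuous_normSq.comp hgc
  have hWc : Continuous W := continuous_const.add (continuous_const.mul Real.continuous_cos)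
  have hcont : Continuous (fun θ => -(W θ * B θ)) := (hWc.mul hBc).neg
  have hint : IntervalIntegrable (fun θ => -(W θ * B θ)) MeasureTheory.volume (-π) π :=
    hcont.intervalIntegrable _ _
  have hFTC := intervalIntegral.integral_eq_sub_of_hasDerivAt hΦderiv hint
  have hΦeq : Φ π - Φ (-π) = 0 := by
    simp only [hΦdef, hAdef, hBdef]
    rw [hper]
    simp [Real.sin_pi, Real.sin_neg]
  rw [hΦeq, intervalIntegral.integral_neg, neg_eq_zero] at hFTC
  -- the integrand is nonnegative and continuous with zero integral
  have hnonneg : ∀ θ, 0 ≤ W θ * B θ :=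
    fun θ => mul_nonneg (hWpos θ).le (Complex.normSq_nonneg _)
  have hae : (fun θ => W θ * B θ) =ᵐ[MeasureTheory.volume.restrict (Set.Ioc (-π) π)]
      (0 : ℝ → ℝ) :=
    (intervalIntegral.integral_eq_zero_iff_of_le_of_nonneg_ae hle
      (Filter.Eventually.of_forall fun θ => hnonneg θ)
      ((hWc.mul hBc).intervalIntegrable _ _)).mp hFTC
  have hrestr : MeasureTheory.volume.restrict (Set.Icc (-π) π)
      = MeasureTheory.volume.restrict (Set.Ioc (-π) π) :=
    MeasureTheory.Measure.restrict_congr_set MeasureTheory.Ioc_ae_eq_Icc.symm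
  have hzero : Set.EqOn (fun θ => W θ * B θ) (0 : ℝ → ℝ) (Set.Icc (-π) π) := by
    refine MeasureTheory.Measure.eqOn_of_ae_eq (hrestr ▸ hae)
      (hWc.mul hBc).continuousOn continuousOn_const ?_
    rw [interior_Icc, closure_Ioo (by linarith : (-π) ≠ π)]
  have hB0 : ∀ θ ∈ Set.Icc (-π) π, g θ = 0 := by
    intro θ hθ
    have h0 := hzero hθ
    simp only [Pi.zero_apply] at h0
    have hB0' : B θ = 0 := by
      rcases mul_eq_zero.mp h0 with h | h
      · exact absurd h (hWpos θ).ne'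
      · exact h
    exact Complex.normSq_eq_zero.mp hB0'
  apply hnc
  refine ⟨f (-π), fun θ hθ => ?_⟩
  have hbound := Convex.norm_image_sub_le_of_norm_hasDerivWithin_le
    (f' := g) (fun x hx => (hfd x).hasDerivAt.hasDerivWithinAt)
    (C := 0) (fun x hx => by rw [hB0 x hx]; simp)
    (convex_Icc (-π) π) (Set.left_mem_Icc.mpr hle) hθ
  simp only [zero_mul] at hbound
  exact sub_eq_zero.mp (norm_le_zero_iff.mp hbound)
end

section
/- Let ε > 0 and let f : [0,π] → ℂ solve -ε(sin θ f')' - f' = λ f on (0,π). Define f₊(t) = f(θ(t)) via the change of variables cos θ = tanh t, sin θ = sech t, t ∈ ℝ. Then f₊ satisfies -ε f₊''(t) + f₊'(t) = λ sech t · f₊(t) for all t ∈ ℝ. -/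
open Real intervalIntegral

lemma tanh_lt_one' (x : ℝ) : Real.tanh x < 1 := by
  rw [Real.tanh_eq_sinh_div_cosh, div_lt_one (Real.cosh_pos x)]
  nlinarith [Real.cosh_eq x, Real.sinh_eq x, Real.exp_pos (-x)]

lemma neg_one_lt_tanh' (x : ℝ) : -1 < Real.tanh x := by
  rw [Real.tanh_eq_sinh_div_cosh, lt_div_iff₀ (Real.cosh_pos x)]
  nlinarith [Real.cosh_eq x, Real.sinh_eq x, Real.exp_pos x]

lemma one_sub_tanh_sq (x : ℝ) : 1 - Real.tanh x ^ 2 = (1 / Real.cosh x) ^ 2 := by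
  have hc := Real.cosh_pos x
  rw [Real.tanh_eq_sinh_div_cosh]
  have h := Real.cosh_sq_sub_sinh_sq x
  field_simp
  linarith

lemma hasDerivAt_tanh' (x : ℝ) :
    HasDerivAt Real.tanh ((1 / Real.cosh x) ^ 2) x := by
  have hc := Real.cosh_pos x
  have h := (Real.hasDerivAt_sinh x).div (Real.hasDerivAt_cosh x) hc.ne'
  have htanh : Real.tanh = fun y => Real.sinh y / Real.cosh y :=
    funext fun y => Real.tanh_eq_sinh_div_cosh y
  rw [htanh]
  refine h.congr_deriv ?_
  have h2 := Real.cosh_sq_sub_sinh_sq x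
  field_simp
  nlinarith [h2]

lemma hasDerivAt_theta (t : ℝ) :
    HasDerivAt (fun s => Real.arccos (Real.tanh s)) (-(1 / Real.cosh t)) t := by
  have h1 : Real.tanh t ≠ -1 := (neg_one_lt_tanh' t).ne'
  have h2 : Real.tanh t ≠ 1 := (tanh_lt_one' t).ne
  have hc := Real.cosh_pos t
  have h := (Real.hasDerivAt_arccos h1 h2).comp t (hasDerivAt_tanh' t)
  refine h.congr_deriv ?_
  rw [one_sub_tanh_sq, Real.sqrt_sq (by positivity)]
  field_simp

/-- Under the change of variables `cos θ = tanh t`, `sin θ = sech t`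
(i.e. `θ(t) = arccos (tanh t)`), a solution of `-ε(sin θ f')' - f' = λ f`
on `(0,π)` transforms into a solution `f₊(t) = f(θ(t))` of
`-ε f₊'' + f₊' = λ sech t · f₊` on `ℝ`. -/
theorem change_of_variables_to_line (ε : ℝ) (hε : 0 < ε) (lam : ℂ) (f : ℝ → ℂ)
    (hf : ContDiff ℝ 2 f)
    (heig : ∀ θ ∈ Set.Ioo 0 π,
      -(ε : ℂ) * deriv (fun t => (Real.sin t : ℂ) * deriv f t) θ - deriv f θ
        = lam * f θ) :
    ∀ t : ℝ,
      -(ε : ℂ) * deriv (deriv (fun s => f (Real.arccos (Real.tanh s)))) t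
        + deriv (fun s => f (Real.arccos (Real.tanh s))) t
        = lam * ((1 / Real.cosh t : ℝ) : ℂ) * f (Real.arccos (Real.tanh t)) := by
  intro t
  set θ : ℝ → ℝ := fun s => Real.arccos (Real.tanh s) with hθ
  -- smoothness facts
  have hf1 : Differentiable ℝ f := hf.differentiable (by norm_num)
  have hf' : ContDiff ℝ 1 (deriv f) := (contDiff_succ_iff_deriv.mp
    (show ContDiff ℝ ((1 : WithTop ℕ∞) + 1) f by exact_mod_cast hf)).2.2
  have hf'd : Differentiable ℝ (deriv f) := hf'.differentiable (by norm_num)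
  -- first derivative of f ∘ θ
  have hderiv1 : ∀ s : ℝ, HasDerivAt (fun s => f (θ s))
      ((-(1 / Real.cosh s) : ℝ) • deriv f (θ s)) s := fun s =>
    ((hf1 (θ s)).hasDerivAt).scomp s (hasDerivAt_theta s)
  have hD1 : deriv (fun s => f (θ s)) = fun s =>
      ((-(1 / Real.cosh s) : ℝ) : ℂ) * deriv f (θ s) := by
    funext s
    rw [(hderiv1 s).deriv]
    simp [Complex.real_smul]
  -- second derivative
  have hsech : ∀ s : ℝ, HasDerivAt (fun s : ℝ => -(1 / Real.cosh s))
      (Real.sinh s / Real.cosh s ^ 2) s := by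
    intro s
    have hc := Real.cosh_pos s
    have := ((hasDerivAt_const s (1 : ℝ)).div (Real.hasDerivAt_cosh s) hc.ne').neg
    refine this.congr_deriv ?_
    field_simp
    ring
  have hderiv2 : HasDerivAt (deriv (fun s => f (θ s)))
      (((Real.sinh t / Real.cosh t ^ 2 : ℝ) : ℂ) * deriv f (θ t)
        + ((-(1 / Real.cosh t) : ℝ) : ℂ)
          * ((-(1 / Real.cosh t) : ℝ) • deriv (deriv f) (θ t))) t := by
    rw [hD1]
    exact ((hsech t).ofReal_comp).mul
      (((hf'd (θ t)).hasDerivAt).scomp t (hasDerivAt_theta t))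
  -- evaluate the eigen-equation at θ t
  have htmem : θ t ∈ Set.Ioo 0 π :=
    ⟨Real.arccos_pos.mpr (tanh_lt_one' t),
      lt_of_le_of_ne (Real.arccos_le_pi _) fun h =>
        absurd (Real.arccos_eq_pi.mp h) (not_le.mpr (neg_one_lt_tanh' t))⟩
  have hsin : Real.sin (θ t) = 1 / Real.cosh t := by
    rw [hθ, Real.sin_arccos, one_sub_tanh_sq, Real.sqrt_sq (by positivity)]
  have hcos : Real.cos (θ t) = Real.tanh t := by
    rw [hθ]
    exact Real.cos_arccos (neg_one_lt_tanh' t).le (tanh_lt_one' t).le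
  have hmul : deriv (fun x => (Real.sin x : ℂ) * deriv f x) (θ t)
      = (Real.cos (θ t) : ℂ) * deriv f (θ t)
        + (Real.sin (θ t) : ℂ) * deriv (deriv f) (θ t) := by
    exact (((Real.hasDerivAt_sin (θ t)).ofReal_comp).mul
      ((hf'd (θ t)).hasDerivAt)).deriv
  have heq := heig (θ t) htmem
  rw [hmul, hsin, hcos] at heq
  -- put everything together
  rw [hderiv2.deriv, hD1]
  have hc := Real.cosh_pos t
  have hsc : ((Real.cosh t : ℝ) : ℂ) ≠ 0 := by exact_mod_cast hc.ne'
  have htanh : ((Real.tanh t : ℝ) : ℂ) = ((Real.sinh t : ℝ) : ℂ) / ((Real.cosh t : ℝ) : ℂ) := by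
    exact_mod_cast congrArg (Complex.ofReal) (Real.tanh_eq_sinh_div_cosh t)
  rw [htanh] at heq
  simp only [Complex.real_smul, Complex.ofReal_neg, Complex.ofReal_div, Complex.ofReal_one,
    Complex.ofReal_pow] at heq ⊢
  have hsc' : Complex.cosh (t : ℂ) ≠ 0 := by rw [← Complex.ofReal_cosh]; exact hsc
  field_simp [hsc'] at heq ⊢
  linear_combination heq
end

section
/- Let ε ∈ ℝ and λ ∈ ℂ. Suppose f : [-π,π] → ℂ is C² periodic, satisfies -ε(sin θ f')' - f' = λ f, and satisfies the symmetry f(θ) = conj(f(-θ)) for all θ ∈ [-π,π]. Then ∫_{-π}^{π} sin θ |f'(θ)|² dθ = 0, and hence Re λ = 0 if f is not identically zero. -/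
open Real intervalIntegral

/-- If a `C²` periodic eigenfunction `f` of `-ε(sin θ f')' - f' = λ f` has the
symmetry `f(θ) = conj(f(-θ))`, then `∫ sin θ |f'|² dθ = 0`, and `Re λ = 0`
provided `f` is not identically zero. -/
theorem symmetry_implies_purely_imaginary (ε : ℝ) (lam : ℂ) (f : ℝ → ℂ)
    (hf : ContDiff ℝ 2 f)
    (hper : f (-π) = f π) (hper' : deriv f (-π) = deriv f π)
    (heig : ∀ θ ∈ Set.Icc (-π) π,
      -(ε : ℂ) * deriv (fun t => (Real.sin t : ℂ) * deriv f t) θ - deriv f θ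
        = lam * f θ)
    (hsym : ∀ θ ∈ Set.Icc (-π) π, f θ = (starRingEnd ℂ) (f (-θ))) :
    (∫ θ in (-π)..π, Real.sin θ * ‖deriv f θ‖ ^ 2) = 0
    ∧ ((∃ θ ∈ Set.Icc (-π) π, f θ ≠ 0) → lam.re = 0) := by
  have hf1 : ContDiff ℝ 1 (deriv f) := by
    have h2 : ContDiff ℝ (1 + 1) f := by exact_mod_cast hf
    exact (contDiff_succ_iff_deriv.mp h2).2.2
  have hdf : Differentiable ℝ f := hf.differentiable (by norm_num)
  have hcf : Continuous f := hdf.continuous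
  have hdf' : Differentiable ℝ (deriv f) := hf1.differentiable one_ne_zero
  have hcf' : Continuous (deriv f) := hdf'.continuous
  set u : ℝ → ℂ := fun t => (Real.sin t : ℂ) * deriv f t with hu_def
  have hu : ContDiff ℝ 1 u :=
    ((Complex.ofRealCLM.contDiff).comp Real.contDiff_sin).mul hf1
  have hdu : Differentiable ℝ u := hu.differentiable one_ne_zero
  have hcu' : Continuous (deriv u) := (contDiff_one_iff_deriv.mp hu).2
  -- oddness of ‖deriv f‖ on the open interval
  have hodd : ∀ θ ∈ Set.Ioo (-π) π, ‖deriv f (-θ)‖ = ‖deriv f θ‖ := by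
    intro θ hθ
    have hmem : Set.Icc (-π) π ∈ nhds θ := Icc_mem_nhds hθ.1 hθ.2
    have heqn : f =ᶠ[nhds θ] fun t => (starRingEnd ℂ) (f (-t)) :=
      Filter.eventuallyEq_of_mem hmem (fun t ht => hsym t ht)
    have h0 : HasDerivAt (fun t : ℝ => f (-t)) (-(deriv f (-θ))) θ := by
      have h := HasDerivAt.scomp_of_eq (x := θ) (hg := (hdf (-θ)).hasDerivAt)
        (hh := hasDerivAt_neg θ) rfl
      simpa [Function.comp_def] using h
    have h1 : HasDerivAt (fun t => (starRingEnd ℂ) (f (-t)))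
        ((starRingEnd ℂ) (-(deriv f (-θ)))) θ := h0.star
    have h2 : HasDerivAt f ((starRingEnd ℂ) (-(deriv f (-θ)))) θ :=
      h1.congr_of_eventuallyEq heqn
    have : deriv f θ = (starRingEnd ℂ) (-(deriv f (-θ))) := h2.deriv
    rw [this]
    simp
  -- Part 1
  have part1 : (∫ θ in (-π)..π, Real.sin θ * ‖deriv f θ‖ ^ 2) = 0 := by
    set g : ℝ → ℝ := fun θ => Real.sin θ * ‖deriv f θ‖ ^ 2 with hg_def
    have key : (∫ θ in (-π)..π, g (-θ)) = ∫ θ in (-π)..π, g θ := by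
      rw [intervalIntegral.integral_comp_neg]
      norm_num
    have key2 : (∫ θ in (-π)..π, g (-θ)) = ∫ θ in (-π)..π, -g θ := by
      apply intervalIntegral.integral_congr
      intro θ hθ
      have hθ' : θ ∈ Set.Icc (-π) π := by
        simpa [Set.uIcc_of_le (by linarith [Real.pi_pos] : -π ≤ π)] using hθ
      simp only [hg_def, Real.sin_neg]
      rcases eq_or_ne (Real.sin θ) 0 with h0 | h0
      · simp [h0]
      · have hIoo : θ ∈ Set.Ioo (-π) π := by
          rcases lt_or_eq_of_le hθ'.1 with h | h
          · rcases lt_or_eq_of_le hθ'.2 with h' | h'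
            · exact ⟨h, h'⟩
            · exact absurd (h' ▸ Real.sin_pi) h0
          · exact absurd (by rw [← h]; simp) h0
        rw [hodd θ hIoo]; ring
    have h3 : (∫ θ in (-π)..π, g θ) = -∫ θ in (-π)..π, g θ := by
      conv_lhs => rw [← key, key2]
      exact intervalIntegral.integral_neg
    linarith
  refine ⟨part1, ?_⟩
  rintro ⟨θ₀, hθ₀, hfθ₀⟩
  -- integrability facts
  have hle : (-π : ℝ) ≤ π := by linarith [Real.pi_pos]
  have hii : ∀ (h : ℝ → ℂ), Continuous h → IntervalIntegrable h MeasureTheory.volume (-π) π :=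
    fun h hh => hh.intervalIntegrable _ _
  have hcstar : Continuous fun t => (starRingEnd ℂ) (f t) := Complex.continuous_conj.comp hcf
  have hcstar' : Continuous fun t => (starRingEnd ℂ) (deriv f t) := Complex.continuous_conj.comp hcf'
  -- IBP: ∫ u' conj f + u conj f' = 0
  have hVd : ∀ x ∈ Set.uIcc (-π) π, HasDerivAt (fun t => (starRingEnd ℂ) (f t))
      ((starRingEnd ℂ) (deriv f x)) x := fun x _ => (hdf x).hasDerivAt.star
  have hUd : ∀ x ∈ Set.uIcc (-π) π, HasDerivAt u (deriv u x) x :=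
    fun x _ => (hdu x).hasDerivAt
  have ibp1 : (∫ θ in (-π)..π, deriv u θ * (starRingEnd ℂ) (f θ)
      + u θ * (starRingEnd ℂ) (deriv f θ)) = 0 := by
    rw [intervalIntegral.integral_deriv_mul_eq_sub hUd hVd
      (hii _ hcu') (hii _ hcstar')]
    simp [hu_def, Real.sin_pi]
  have hFd : ∀ x ∈ Set.uIcc (-π) π, HasDerivAt f (deriv f x) x :=
    fun x _ => (hdf x).hasDerivAt
  have ibp2 : (∫ θ in (-π)..π, deriv f θ * (starRingEnd ℂ) (f θ)
      + f θ * (starRingEnd ℂ) (deriv f θ)) = 0 := by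
    rw [intervalIntegral.integral_deriv_mul_eq_sub hFd hVd
      (hii _ hcf') (hii _ hcstar')]
    rw [hper]; ring
  -- the second integral in ibp1 is the (complex) sin |f'|^2 integral
  have huconj : (∫ θ in (-π)..π, u θ * (starRingEnd ℂ) (deriv f θ))
      = ((∫ θ in (-π)..π, Real.sin θ * ‖deriv f θ‖ ^ 2 : ℝ) : ℂ) := by
    rw [← intervalIntegral.integral_ofReal]
    apply intervalIntegral.integral_congr
    intro θ _
    simp only [hu_def]
    rw [mul_assoc, Complex.mul_conj, Complex.normSq_eq_norm_sq]
    push_cast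
    ring
  have hint1 : (∫ θ in (-π)..π, deriv u θ * (starRingEnd ℂ) (f θ)) = 0 := by
    have := ibp1
    rw [intervalIntegral.integral_add (hii (fun θ => deriv u θ * (starRingEnd ℂ) (f θ)) (hcu'.mul hcstar)) 
      (hii (fun θ => u θ * (starRingEnd ℂ) (deriv f θ)) ((hu.continuous).mul hcstar'))] at this
    rw [huconj, part1] at this
    simpa using this
  -- real part of B := ∫ f' conj f is 0
  set B : ℂ := ∫ θ in (-π)..π, deriv f θ * (starRingEnd ℂ) (f θ) with hB_def
  have hReB : B.re = 0 := by
    have h2 : (∫ θ in (-π)..π, f θ * (starRingEnd ℂ) (deriv f θ))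
        = (starRingEnd ℂ) B := by
      have hc : ∀ (h : ℝ → ℂ), Continuous h →
          (∫ θ in (-π)..π, (starRingEnd ℂ) (h θ)) = (starRingEnd ℂ) (∫ θ in (-π)..π, h θ) := by
        intro h hh
        have := (Complex.conjCLE.toContinuousLinearMap).intervalIntegral_comp_comm (hii h hh)
        simpa using this
      rw [hB_def, ← hc (fun θ => deriv f θ * (starRingEnd ℂ) (f θ)) (hcf'.mul hcstar)]
      apply intervalIntegral.integral_congr
      intro θ _
      simp [mul_comm]
    rw [intervalIntegral.integral_add (hii (fun θ => deriv f θ * (starRingEnd ℂ) (f θ)) (hcf'.mul hcstar))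
      (hii (fun θ => f θ * (starRingEnd ℂ) (deriv f θ)) (hcf.mul hcstar')), h2] at ibp2
    have h3 : B + (starRingEnd ℂ) B = 0 := by rw [hB_def]; exact ibp2
    have h4 := congrArg Complex.re h3
    simp only [Complex.add_re, Complex.conj_re, Complex.zero_re] at h4
    linarith
  -- N = ∫ ‖f‖²
  set N : ℝ := ∫ θ in (-π)..π, ‖f θ‖ ^ 2 with hN_def
  have hNc : (∫ θ in (-π)..π, f θ * (starRingEnd ℂ) (f θ)) = (N : ℂ) := by
    rw [hN_def, ← intervalIntegral.integral_ofReal]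
    apply intervalIntegral.integral_congr
    intro θ _
    show f θ * (starRingEnd ℂ) (f θ) = ((‖f θ‖ ^ 2 : ℝ) : ℂ)
    rw [Complex.mul_conj, Complex.normSq_eq_norm_sq]
  -- main identity: -B = lam * N
  have hmain : -B = lam * (N : ℂ) := by
    have hcongr : (∫ θ in (-π)..π, (-(ε:ℂ) * deriv u θ - deriv f θ) * (starRingEnd ℂ) (f θ))
        = ∫ θ in (-π)..π, lam * (f θ * (starRingEnd ℂ) (f θ)) := by
      apply intervalIntegral.integral_congr
      intro θ hθ
      have hθ' : θ ∈ Set.Icc (-π) π := by simpa [Set.uIcc_of_le hle] using hθ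
      show (-(ε:ℂ) * deriv u θ - deriv f θ) * (starRingEnd ℂ) (f θ)
        = lam * (f θ * (starRingEnd ℂ) (f θ))
      rw [heig θ hθ']; ring
    rw [intervalIntegral.integral_const_mul, hNc] at hcongr
    have hLHS : (∫ θ in (-π)..π, (-(ε:ℂ) * deriv u θ - deriv f θ) * (starRingEnd ℂ) (f θ))
        = -(ε:ℂ) * (∫ θ in (-π)..π, deriv u θ * (starRingEnd ℂ) (f θ)) - B := by
      rw [hB_def]
      rw [show (fun θ => (-(ε:ℂ) * deriv u θ - deriv f θ) * (starRingEnd ℂ) (f θ))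
          = fun θ => -(ε:ℂ) * (deriv u θ * (starRingEnd ℂ) (f θ))
            - deriv f θ * (starRingEnd ℂ) (f θ)
          from funext fun θ => by ring]
      rw [intervalIntegral.integral_sub ((hii (fun θ => deriv u θ * (starRingEnd ℂ) (f θ)) (hcu'.mul hcstar)).const_mul _)
        (hii (fun θ => deriv f θ * (starRingEnd ℂ) (f θ)) (hcf'.mul hcstar)), intervalIntegral.integral_const_mul]
    rw [hLHS, hint1] at hcongr
    simpa using hcongr
  have hRe : lam.re * N = 0 := by
    have h5 := congrArg Complex.re hmain
    simp only [Complex.neg_re, hReB, Complex.mul_re, Complex.ofReal_re, Complex.ofReal_im,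
      mul_zero, sub_zero, neg_zero] at h5
    linarith
  -- positivity of N
  have hNpos : 0 < N := by
    have hpi : -π < π := by linarith [Real.pi_pos]
    have hgi : IntervalIntegrable (fun θ => ‖f θ‖ ^ 2) MeasureTheory.volume (-π) π :=
      ((hcf.norm).pow 2).intervalIntegrable _ _
    rw [hN_def, intervalIntegral.integral_pos_iff_support_of_nonneg_ae
      (Filter.Eventually.of_forall fun x => sq_nonneg _) hgi]
    refine ⟨hpi, ?_⟩
    have hUopen : IsOpen {θ : ℝ | f θ ≠ 0} := isOpen_compl_singleton.preimage hcf
    have hne : ({θ : ℝ | f θ ≠ 0} ∩ Set.Ioo (-π) π).Nonempty := by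
      have hcl : θ₀ ∈ closure (Set.Ioo (-π) π) := by
        rw [closure_Ioo hpi.ne]; exact hθ₀
      exact mem_closure_iff.mp hcl _ hUopen hfθ₀
    have hsub : {θ : ℝ | f θ ≠ 0} ∩ Set.Ioo (-π) π
        ⊆ (Function.support fun θ => ‖f θ‖ ^ 2) ∩ Set.Ioc (-π) π := by
      rintro x ⟨hx1, hx2⟩
      refine ⟨?_, ?_⟩
      · simp only [Function.mem_support, ne_eq, pow_eq_zero_iff, norm_eq_zero]
        simpa using hx1
      · exact ⟨hx2.1, le_of_lt hx2.2⟩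
    exact lt_of_lt_of_le ((hUopen.inter isOpen_Ioo).measure_pos _ hne)
      (MeasureTheory.measure_mono hsub)
  rcases mul_eq_zero.mp hRe with h | h
  · exact h
  · exact absurd h hNpos.ne'
end
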